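/- Let G be an unmixed bipartite graph on {x_1,...,x_n} ∪ {y_1,...,y_n}, n ≥ 1, without isolated vertices, satisfying conditions (a) and (b). Then all maximal chains of the lattice L_G (the lattice of minimal vertex covers of G) have the same length. -/

import Mathlib

def IsCoverOn (n : ℕ) (E : Fin n → Fin n → Prop) (F : Set (Fin n))
    (C : Set (Fin n ⊕ Fin n)) : Prop :=
  (∀ v ∈ C, Sum.elim (· ∈ F) (· ∈ F) v) ∧
  (∀ i ∈ F, ∀ j ∈ F, E i j → Sum.inl i ∈ C ∨ Sum.inr j ∈ C)

def IsMinCoverOn (n : ℕ) (E : Fin n → Fin n → Prop) (F : Set (Fin n))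
    (C : Set (Fin n ⊕ Fin n)) : Prop :=
  IsCoverOn n E F C ∧ ∀ D ⊂ C, ¬ IsCoverOn n E F D

def coverSetOn (n : ℕ) (F α : Set (Fin n)) : Set (Fin n ⊕ Fin n) :=
  (Sum.inl '' α) ∪ (Sum.inr '' (F \ α))

def LGF (n : ℕ) (E : Fin n → Fin n → Prop) (F : Set (Fin n)) : Set (Set (Fin n)) :=
  {α | α ⊆ F ∧ IsMinCoverOn n E F (coverSetOn n F α)}

def IsMaxChain' (n : ℕ) (E : Fin n → Fin n → Prop) (F : Set (Fin n))
    (c : Set (Set (Fin n))) : Prop :=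
  c ⊆ LGF n E F ∧ IsChain (· ⊆ ·) c ∧
    ∀ c', c' ⊆ LGF n E F → IsChain (· ⊆ ·) c' → c ⊆ c' → c' = c

section Aux

variable {n : ℕ} (E : Fin n → Fin n → Prop)

/-- Closed under `E`-predecessors. -/
def MyClosed (α : Set (Fin n)) : Prop := ∀ i j, E i j → j ∈ α → i ∈ α

/-- The `E`-equivalence class of `x`. -/
def cls (x : Fin n) : Set (Fin n) := {j | E x j ∧ E j x}

/-- Image of `α` under `cls`. -/
def img (α : Set (Fin n)) : Set (Set (Fin n)) := cls E '' α

noncomputable def hfun (α : Set (Fin n)) : ℕ := (img E α).ncard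

variable {E}

lemma inl_mem_cover {α : Set (Fin n)} {i : Fin n} :
    Sum.inl i ∈ coverSetOn n Set.univ α ↔ i ∈ α := by
  simp [coverSetOn]

lemma inr_mem_cover {α : Set (Fin n)} {j : Fin n} :
    Sum.inr j ∈ coverSetOn n Set.univ α ↔ j ∉ α := by
  simp [coverSetOn]

lemma mem_LGF_iff (ha : ∀ i, E i i) {α : Set (Fin n)} :
    α ∈ LGF n E Set.univ ↔ MyClosed E α := by
  constructor
  · rintro ⟨-, ⟨⟨-, hcov⟩, -⟩⟩
    intro i j hij hj
    rcases hcov i trivial j trivial hij with h | h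
    · exact inl_mem_cover.mp h
    · exact absurd hj (inr_mem_cover.mp h)
  · intro hcl
    refine ⟨Set.subset_univ _, ⟨⟨?_, ?_⟩, ?_⟩⟩
    · rintro v -
      cases v <;> simp
    · intro i _ j _ hij
      by_cases hj : j ∈ α
      · exact Or.inl (inl_mem_cover.mpr (hcl i j hij hj))
      · exact Or.inr (inr_mem_cover.mpr hj)
    · rintro D hD ⟨-, hDcov⟩
      obtain ⟨v, hvC, hvD⟩ := Set.exists_of_ssubset hD
      cases v with
      | inl i =>
        have hi : i ∈ α := inl_mem_cover.mp hvC
        rcases hDcov i trivial i trivial (ha i) with h | h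
        · exact hvD h
        · exact (inr_mem_cover.mp (hD.subset h)) hi
      | inr j =>
        have hj : j ∉ α := inr_mem_cover.mp hvC
        rcases hDcov j trivial j trivial (ha j) with h | h
        · exact hj (inl_mem_cover.mp (hD.subset h))
        · exact hvD h

lemma Etrans (ha : ∀ i, E i i)
    (hb : ∀ i j k : Fin n, i ≠ j → j ≠ k → i ≠ k → E i j → E j k → E i k)
    {i j k : Fin n} (h1 : E i j) (h2 : E j k) : E i k := by
  by_cases hij : i = j
  · subst hij; exact h2
  by_cases hjk : j = k
  · subst hjk; exact h1
  by_cases hik : i = k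
  · subst hik; exact ha i
  exact hb i j k hij hjk hik h1 h2

lemma cls_eq (ha : ∀ i, E i i)
    (hb : ∀ i j k : Fin n, i ≠ j → j ≠ k → i ≠ k → E i j → E j k → E i k)
    {x y : Fin n} (h1 : E x y) (h2 : E y x) : cls E x = cls E y := by
  ext j
  constructor
  · rintro ⟨hxj, hjx⟩
    exact ⟨Etrans ha hb h2 hxj, Etrans ha hb hjx h1⟩
  · rintro ⟨hyj, hjy⟩
    exact ⟨Etrans ha hb h1 hyj, Etrans ha hb hjy h2⟩

lemma cls_not_mem_img (ha : ∀ i, E i i) {α : Set (Fin n)} {x : Fin n}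
    (hcl : MyClosed E α) (hx : x ∉ α) : cls E x ∉ img E α := by
  rintro ⟨y, hy, heq⟩
  have hyx : y ∈ cls E x := heq ▸ ⟨ha y, ha y⟩
  exact hx (hcl x y hyx.1 hy)

lemma hfun_mono {α β : Set (Fin n)} (h : α ⊆ β) : hfun E α ≤ hfun E β :=
  Set.ncard_le_ncard (Set.image_mono h) (Set.toFinite _)

lemma hfun_lt (ha : ∀ i, E i i) {α β : Set (Fin n)}
    (hcl : MyClosed E α) (hss : α ⊂ β) : hfun E α < hfun E β := by
  obtain ⟨x, hxβ, hxα⟩ := Set.exists_of_ssubset hss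
  apply Set.ncard_lt_ncard _ (Set.toFinite _)
  constructor
  · exact Set.image_mono hss.subset
  · intro hcon
    exact cls_not_mem_img ha hcl hxα (hcon ⟨x, hxβ, rfl⟩)

/-- Main counting lemma. -/
lemma maxChain_card (ha : ∀ i, E i i)
    (hb : ∀ i j k : Fin n, i ≠ j → j ≠ k → i ≠ k → E i j → E j k → E i k)
    {c : Set (Set (Fin n))} (hmc : IsMaxChain' n E Set.univ c) :
    c.ncard = hfun E Set.univ + 1 := by
  obtain ⟨hsub, hch, hmax⟩ := hmc
  have hclosed : ∀ α ∈ c, MyClosed E α := fun α hα => (mem_LGF_iff ha).mp (hsub hα)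
  -- ∅ ∈ c
  have h0 : (∅ : Set (Fin n)) ∈ c := by
    have hchain : IsChain (· ⊆ ·) (insert (∅ : Set (Fin n)) c) :=
      hch.insert (fun b _ _ => Or.inl (Set.empty_subset b))
    have hsub' : insert (∅ : Set (Fin n)) c ⊆ LGF n E Set.univ := by
      rw [Set.insert_subset_iff]
      exact ⟨(mem_LGF_iff ha).mpr (fun i j _ h => absurd h (Set.notMem_empty j)), hsub⟩
    have := hmax _ hsub' hchain (Set.subset_insert _ _)
    rw [← this]; exact Set.mem_insert _ _
  -- univ ∈ c
  have hU : (Set.univ : Set (Fin n)) ∈ c := by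
    have hchain : IsChain (· ⊆ ·) (insert (Set.univ : Set (Fin n)) c) :=
      hch.insert (fun b _ _ => Or.inr (Set.subset_univ b))
    have hsub' : insert (Set.univ : Set (Fin n)) c ⊆ LGF n E Set.univ := by
      rw [Set.insert_subset_iff]
      exact ⟨(mem_LGF_iff ha).mpr (fun i j _ _ => trivial), hsub⟩
    have := hmax _ hsub' hchain (Set.subset_insert _ _)
    rw [← this]; exact Set.mem_insert _ _
  set k := hfun E (Set.univ : Set (Fin n)) with hk
  -- strict monotonicity on the chain gives injectivity
  have hmonoc : ∀ a ∈ c, ∀ b ∈ c, a ⊂ b → hfun E a < hfun E b :=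
    fun a hac b _ hab => hfun_lt ha (hclosed a hac) hab
  have hinj : Set.InjOn (hfun E) c := by
    intro a hac b hbc hehq
    by_contra hne
    rcases hch hac hbc hne with h | h
    · exact absurd hehq (Nat.ne_of_lt (hmonoc a hac b hbc ⟨h, fun h' => hne (subset_antisymm h h')⟩))
    · exact absurd hehq.symm (Nat.ne_of_lt (hmonoc b hbc a hac ⟨h, fun h' => hne (subset_antisymm h' h)⟩))
  -- the step: if m < k is attained then m+1 is attained
  have step : ∀ m, m < k → (∃ α ∈ c, hfun E α = m) → ∃ γ ∈ c, hfun E γ = m + 1 := by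
    rintro m hmk ⟨α, hαc, hαm⟩
    -- β: element of c with minimal hfun among those with hfun > m
    have hSne : (Set.univ : Set (Fin n)) ∈ {δ ∈ c | m < hfun E δ} := ⟨hU, hmk⟩
    obtain ⟨β, ⟨hβc, hβm⟩, hβmin⟩ :=
      Set.exists_min_image {δ ∈ c | m < hfun E δ} (hfun E) (Set.toFinite _) ⟨_, hSne⟩
    have hαβ : α ⊂ β := by
      have hne : α ≠ β := fun h => by rw [← h, hαm] at hβm; omega
      rcases hch hαc hβc hne with h | h
      · exact ⟨h, fun h' => by
          have := hfun_mono (E := E) h'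
          omega⟩
      · exfalso
        have := hfun_mono (E := E) h
        omega
    obtain ⟨x0, hx0⟩ := Set.exists_of_ssubset hαβ
    -- pick a minimal element x of β \ α w.r.t. the strict preorder
    set T := β \ α with hT
    have hx0T : x0 ∈ T := hx0
    set g : Fin n → ℕ := fun x => (T ∩ {y | E y x ∧ ¬ E x y}).ncard with hg
    obtain ⟨x, hxT, hxmin⟩ := Set.exists_min_image T g (Set.toFinite _) ⟨x0, hx0T⟩
    have hxminimal : ∀ y ∈ T, E y x → E x y := by
      intro y hyT hyx
      by_contra hxy
      have hss : T ∩ {z | E z y ∧ ¬ E y z} ⊂ T ∩ {z | E z x ∧ ¬ E x z} := by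
        constructor
        · rintro z ⟨hzT, hzy, hyz⟩
          refine ⟨hzT, Etrans ha hb hzy hyx, fun hxz => hxy (Etrans ha hb hxz hzy)⟩
        · intro hcon
          have hy1 : y ∈ T ∩ {z | E z x ∧ ¬ E x z} := ⟨hyT, hyx, hxy⟩
          have hy2 : y ∉ T ∩ {z | E z y ∧ ¬ E y z} := by
            rintro ⟨-, -, hyy⟩; exact hyy (ha y)
          exact hy2 (hcon hy1)
      have := Set.ncard_lt_ncard hss (Set.toFinite _)
      have := hxmin y hyT
      simp only [hg] at this
      omega
    -- γ = α ∪ cls x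
    set γ : Set (Fin n) := α ∪ cls E x with hγ
    have hxβ : x ∈ β := hxT.1
    have hxα : x ∉ α := hxT.2
    have hβcl : MyClosed E β := hclosed β hβc
    have hαcl : MyClosed E α := hclosed α hαc
    have hclsβ : cls E x ⊆ β := fun z hz => hβcl z x hz.2 hxβ
    have hγβ : γ ⊆ β := Set.union_subset hαβ.subset hclsβ
    have hαγ : α ⊂ γ := by
      constructor
      · exact Set.subset_union_left
      · intro hcon
        exact hxα (hcon (Or.inr ⟨ha x, ha x⟩))
    have hγcl : MyClosed E γ := by
      intro i j hij hj
      rcases hj with hj | hj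
      · exact Or.inl (hαcl i j hij hj)
      · have hjβ : j ∈ β := hclsβ hj
        have hix : E i x := Etrans ha hb hij hj.2
        by_cases hiα : i ∈ α
        · exact Or.inl hiα
        · have hiβ : i ∈ β := hβcl i j hij hjβ
          have hxi : E x i := hxminimal i ⟨hiβ, hiα⟩ hix
          exact Or.inr ⟨hxi, hix⟩
    -- hfun γ = m + 1
    have himg : img E γ = insert (cls E x) (img E α) := by
      rw [hγ]
      unfold img
      rw [Set.image_union]
      have : cls E '' cls E x = {cls E x} := by
        apply subset_antisymm
        · rintro S ⟨z, hz, rfl⟩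
          exact (cls_eq ha hb hz.1 hz.2).symm
        · rintro S rfl
          exact ⟨x, ⟨ha x, ha x⟩, rfl⟩
      rw [this, Set.union_singleton]
    have hγm : hfun E γ = m + 1 := by
      unfold hfun
      rw [himg, Set.ncard_insert_of_notMem (cls_not_mem_img ha hαcl hxα) (Set.toFinite _)]
      unfold hfun at hαm
      omega
    -- γ is comparable with everything in c
    have hcomp : ∀ δ ∈ c, γ ≠ δ → γ ⊆ δ ∨ δ ⊆ γ := by
      intro δ hδc _
      by_cases hδm : hfun E δ ≤ m
      · right
        rcases eq_or_ne δ α with rfl | hne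
        · exact hαγ.subset
        rcases hch hδc hαc hne with h | h
        · exact h.trans hαγ.subset
        · exfalso
          have := hmonoc α hαc δ hδc ⟨h, fun h' => hne (subset_antisymm h' h)⟩
          omega
      · left
        push_neg at hδm
        have hβδ : hfun E β ≤ hfun E δ := hβmin δ ⟨hδc, hδm⟩
        rcases eq_or_ne δ β with rfl | hne
        · exact hγβ
        rcases hch hδc hβc hne with h | h
        · exfalso
          have := hmonoc δ hδc β hβc ⟨h, fun h' => hne (subset_antisymm h h')⟩
          omega
        · exact hγβ.trans h
    have hγc : γ ∈ c := by
      have hchain : IsChain (· ⊆ ·) (insert γ c) := hch.insert hcomp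
      have hsub' : insert γ c ⊆ LGF n E Set.univ := by
        rw [Set.insert_subset_iff]
        exact ⟨(mem_LGF_iff ha).mpr hγcl, hsub⟩
      have := hmax _ hsub' hchain (Set.subset_insert _ _)
      rw [← this]; exact Set.mem_insert _ _
    exact ⟨γ, hγc, hγm⟩
  -- all values m ≤ k attained
  have hall : ∀ m, m ≤ k → ∃ α ∈ c, hfun E α = m := by
    intro m
    induction m with
    | zero =>
      intro _
      refine ⟨∅, h0, ?_⟩
      unfold hfun img
      simp
    | succ p ih =>
      intro hpk
      exact step p (by omega) (ih (by omega))
  -- conclude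
  have himage : hfun E '' c = Set.Iic k := by
    apply subset_antisymm
    · rintro m ⟨α, hαc, rfl⟩
      exact hfun_mono (Set.subset_univ α)
    · intro m hm
      obtain ⟨α, hαc, hα⟩ := hall m hm
      exact ⟨α, hαc, hα⟩
  calc c.ncard = (hfun E '' c).ncard := (Set.ncard_image_of_injOn hinj).symm
    _ = (Set.Iic k).ncard := by rw [himage]
    _ = k + 1 := by
        rw [← Finset.coe_Iic, Set.ncard_coe_finset, Nat.card_Iic]
      
end Aux

theorem stmt6 (n : ℕ) (hn : 1 ≤ n) (E : Fin n → Fin n → Prop)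
    (ha : ∀ i, E i i)
    (hb : ∀ i j k : Fin n, i ≠ j → j ≠ k → i ≠ k → E i j → E j k → E i k)
    (c₁ c₂ : Set (Set (Fin n)))
    (h₁ : IsMaxChain' n E Set.univ c₁) (h₂ : IsMaxChain' n E Set.univ c₂) :
    c₁.ncard = c₂.ncard := by
  rw [maxChain_card ha hb h₁, maxChain_card ha hb h₂]
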